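/- Let A, B, C, D ∈ M_d(ℂ) satisfy: A and C have nonnegative entries, B and D are positive semidefinite, A_{ij}A_{ji} ≥ |B_{ij}|² and C_{ij}C_{ji} ≥ |D_{ij}|² for all i, j. Then the matrix 𝔅 := diag(AC) + B̃ ⊙ D̃ (where B̃ = B − diag(B), D̃ = D − diag(D), and diag(AC) is the diagonal part of the product AC) has factor width at most 2: it decomposes as 𝔅 = diag(A ⊙ C) + Σ_{i<j} P^{(ij)}, where each P^{(ij)} is a positive semidefinite matrix supported on the 2×2 principal submatrix indexed by {i,j} with entries P^{(ij)}_{ii} = A_{ij}C_{ji}, P^{(ij)}_{jj} = A_{ji}C_{ij}, P^{(ij)}_{ij} = B_{ij}D_{ij}, P^{(ij)}_{ji} = B_{ji}D_{ji}. -/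

import Mathlib

open Matrix Finset
open scoped ComplexOrder

private lemma key_real' (ar br nxi nxj wr : ℝ) (har : 0 ≤ ar) (hbr : 0 ≤ br)
    (h1 : 0 ≤ nxi) (h2 : 0 ≤ nxj) (hw : wr ^ 2 ≤ ar * br * (nxi * nxj)) :
    0 ≤ ar * nxi + br * nxj + 2 * wr := by
  nlinarith [sq_nonneg (ar * nxi - br * nxj),
    add_nonneg (mul_nonneg har h1) (mul_nonneg hbr h2), hw,
    sq_nonneg (ar * nxi + br * nxj + 2 * wr)]

private lemma sum_pair' {d : ℕ} {i j : Fin d} (hij : i ≠ j) (u v : ℂ) (x : Fin d → ℂ) :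
    ∑ l, (if l = i then u else if l = j then v else 0) * x l = u * x i + v * x j := by
  have h : ∀ l, (if l = i then u else if l = j then v else 0) * x l
      = (if l = i then u * x l else 0) + (if l = j then v * x l else 0) := by
    intro l
    split_ifs with h1 h2 <;> simp_all
  simp_rw [h]
  rw [Finset.sum_add_distrib, Finset.sum_ite_eq', Finset.sum_ite_eq']
  simp

private lemma quad_nonneg' (a b p xi xj : ℂ) (ha : a.im = 0) (hb : b.im = 0)
    (har : 0 ≤ a.re) (hbr : 0 ≤ b.re)
    (hp : ‖p‖ ^ 2 ≤ a.re * b.re) :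
    0 ≤ (a * xi + p * xj) * (starRingEnd ℂ) xi
      + ((starRingEnd ℂ) p * xi + b * xj) * (starRingEnd ℂ) xj := by
  set w : ℂ := p * xj * (starRingEnd ℂ) xi with hwdef
  have hre : ((a * xi + p * xj) * (starRingEnd ℂ) xi
      + ((starRingEnd ℂ) p * xi + b * xj) * (starRingEnd ℂ) xj).re
      = a.re * Complex.normSq xi + b.re * Complex.normSq xj + 2 * w.re := by
    simp [Complex.add_re, Complex.mul_re, Complex.mul_im, Complex.normSq_apply, ha, hb, hwdef]
    ring
  have him : ((a * xi + p * xj) * (starRingEnd ℂ) xi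
      + ((starRingEnd ℂ) p * xi + b * xj) * (starRingEnd ℂ) xj).im = 0 := by
    simp [Complex.add_im, Complex.mul_re, Complex.mul_im, ha, hb]
    ring
  have hw2 : w.re ^ 2 ≤ a.re * b.re * (Complex.normSq xi * Complex.normSq xj) := by
    have h1 : w.re ^ 2 ≤ Complex.normSq w := by
      rw [Complex.normSq_apply]; nlinarith [sq_nonneg w.im]
    have h2 : Complex.normSq w = Complex.normSq p * (Complex.normSq xi * Complex.normSq xj) := by
      rw [hwdef]; simp [Complex.normSq_mul]; ring
    have h3 : Complex.normSq p ≤ a.re * b.re := by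
      rw [← Complex.sq_norm]; exact hp
    have h4 : (0:ℝ) ≤ Complex.normSq xi * Complex.normSq xj :=
      mul_nonneg (Complex.normSq_nonneg _) (Complex.normSq_nonneg _)
    calc w.re ^ 2 ≤ Complex.normSq w := h1
      _ = Complex.normSq p * (Complex.normSq xi * Complex.normSq xj) := h2
      _ ≤ a.re * b.re * (Complex.normSq xi * Complex.normSq xj) :=
          mul_le_mul_of_nonneg_right h3 h4
  rw [Complex.le_def]
  constructor
  · rw [Complex.zero_re, hre]
    exact key_real' _ _ _ _ _ har hbr (Complex.normSq_nonneg _) (Complex.normSq_nonneg _) hw2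
  · rw [Complex.zero_im, him]

private lemma psd_two' {d : ℕ} {i j : Fin d} (hij : i ≠ j) (a b p q : ℂ)
    (ha : a.im = 0) (hb : b.im = 0) (har : 0 ≤ a.re) (hbr : 0 ≤ b.re)
    (hq : q = (starRingEnd ℂ) p)
    (hp : ‖p‖ ^ 2 ≤ a.re * b.re) :
    (Matrix.of fun k l =>
        if k = i ∧ l = i then a
        else if k = j ∧ l = j then b
        else if k = i ∧ l = j then p
        else if k = j ∧ l = i then q else (0:ℂ)).PosSemidef := by
  subst hq
  set M : Matrix (Fin d) (Fin d) ℂ := Matrix.of fun k l =>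
        if k = i ∧ l = i then a
        else if k = j ∧ l = j then b
        else if k = i ∧ l = j then p
        else if k = j ∧ l = i then (starRingEnd ℂ) p else (0:ℂ) with hM
  have hrow : ∀ k l, M k l = if k = i then (if l = i then a else if l = j then p else 0)
      else if k = j then (if l = i then (starRingEnd ℂ) p else if l = j then b else 0)
      else 0 := by
    intro k l
    simp only [hM, Matrix.of_apply]
    split_ifs <;> simp_all
  have hmv : ∀ (x : Fin d → ℂ) k, (M *ᵥ x) k =
      if k = i then a * x i + p * x j
      else if k = j then (starRingEnd ℂ) p * x i + b * x j
      else 0 := by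
    intro x k
    rw [Matrix.mulVec, dotProduct]
    by_cases hk : k = i
    · simp only [hrow, hk, eq_self_iff_true, if_true, ite_true]
      exact sum_pair' hij a p x
    · by_cases hk2 : k = j
      · simp only [hrow, hk2, Ne.symm hij, eq_self_iff_true, if_true, ite_true,
          if_false, ite_false]
        exact sum_pair' hij ((starRingEnd ℂ) p) b x
      · simp only [hrow, hk, hk2, if_false, ite_false]
        simp
  refine Matrix.PosSemidef.of_dotProduct_mulVec_nonneg ?_ ?_
  · ext k l
    simp only [Matrix.conjTranspose_apply, hrow]
    have hare : (starRingEnd ℂ) a = a := Complex.conj_eq_iff_im.mpr ha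
    have hbre : (starRingEnd ℂ) b = b := Complex.conj_eq_iff_im.mpr hb
    split_ifs <;> simp_all
  · intro x
    rw [dotProduct]
    simp_rw [hmv]
    have h : ∀ k, (star x) k * (if k = i then a * x i + p * x j
        else if k = j then (starRingEnd ℂ) p * x i + b * x j else 0)
        = (if k = i then (a * x i + p * x j) * (starRingEnd ℂ) (x i) else 0)
        + (if k = j then ((starRingEnd ℂ) p * x i + b * x j) * (starRingEnd ℂ) (x j) else 0) := by
      intro k
      simp only [Pi.star_apply, RCLike.star_def]
      split_ifs with h1 h2 <;> simp_all <;> ring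
    simp_rw [h]
    rw [Finset.sum_add_distrib, Finset.sum_ite_eq', Finset.sum_ite_eq']
    simp only [Finset.mem_univ, if_true]
    exact quad_nonneg' a b p (x i) (x j) ha hb har hbr hp

/-- If `A, C` are entrywise nonnegative, `B, D` are PSD, and the PPT
inequalities `A_{ij}A_{ji} ≥ |B_{ij}|²`, `C_{ij}C_{ji} ≥ |D_{ij}|²` hold, then
`𝔅 = diag(AC) + B̃ ⊙ D̃` decomposes as `diag(A ⊙ C) + Σ_{i<j} P^{(ij)}` with each `P^{(ij)}`
positive semidefinite and supported on the `{i,j}` principal submatrix; in particular `𝔅`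
has factor width at most 2. -/
theorem composition_B_matrix_factor_width_two {d : ℕ}
    (A B C D : Matrix (Fin d) (Fin d) ℂ)
    (hA : ∀ i j, (A i j).im = 0 ∧ 0 ≤ (A i j).re)
    (hC : ∀ i j, (C i j).im = 0 ∧ 0 ≤ (C i j).re)
    (hB : B.PosSemidef) (hD : D.PosSemidef)
    (hAB : ∀ i j, ‖B i j‖ ^ 2 ≤ (A i j * A j i).re)
    (hCD : ∀ i j, ‖D i j‖ ^ 2 ≤ (C i j * C j i).re) :
    -- the 2×2-supported blocks
    let P : Fin d → Fin d → Matrix (Fin d) (Fin d) ℂ := fun i j =>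
      Matrix.of fun k l =>
        if k = i ∧ l = i then A i j * C j i
        else if k = j ∧ l = j then A j i * C i j
        else if k = i ∧ l = j then B i j * D i j
        else if k = j ∧ l = i then B j i * D j i
        else 0
    (∀ i j, i < j → (P i j).PosSemidef) ∧
    (∀ i j, i < j → ∀ k l, (k ∉ ({i, j} : Finset (Fin d)) ∨ l ∉ ({i, j} : Finset (Fin d)))
      → P i j k l = 0) ∧
    Matrix.diagonal (fun i => (A * C) i i)
        + (B - Matrix.diagonal fun i => B i i).hadamard (D - Matrix.diagonal fun i => D i i)
      = Matrix.diagonal (fun i => A i i * C i i)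
        + ∑ p : Fin d × Fin d, if p.1 < p.2 then P p.1 p.2 else 0 := by
  intro P
  have hPdef : P = fun i j => (Matrix.of fun k l =>
        if k = i ∧ l = i then A i j * C j i
        else if k = j ∧ l = j then A j i * C i j
        else if k = i ∧ l = j then B i j * D i j
        else if k = j ∧ l = i then B j i * D j i
        else (0:ℂ)) := rfl
  refine ⟨?_, ?_, ?_⟩
  · -- PSD
    intro i j hij
    have hijne : i ≠ j := ne_of_lt hij
    have ha : (A i j * C j i).im = 0 := by
      simp [Complex.mul_im, (hA i j).1, (hC j i).1]
    have hb : (A j i * C i j).im = 0 := by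
      simp [Complex.mul_im, (hA j i).1, (hC i j).1]
    have har : 0 ≤ (A i j * C j i).re := by
      simp only [Complex.mul_re, (hA i j).1, (hC j i).1, mul_zero, zero_mul, sub_zero]
      exact mul_nonneg (hA i j).2 (hC j i).2
    have hbr : 0 ≤ (A j i * C i j).re := by
      simp only [Complex.mul_re, (hA j i).1, (hC i j).1, mul_zero, zero_mul, sub_zero]
      exact mul_nonneg (hA j i).2 (hC i j).2
    have hq : B j i * D j i = (starRingEnd ℂ) (B i j * D i j) := by
      rw [_root_.map_mul]
      have h1 : (starRingEnd ℂ) (B i j) = B j i := by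
        have := congrFun (congrFun hB.1 j) i
        simpa [Matrix.conjTranspose_apply] using this
      have h2 : (starRingEnd ℂ) (D i j) = D j i := by
        have := congrFun (congrFun hD.1 j) i
        simpa [Matrix.conjTranspose_apply] using this
      rw [h1, h2]
    have hp : ‖B i j * D i j‖ ^ 2
        ≤ (A i j * C j i).re * (A j i * C i j).re := by
      have h1 := hAB i j
      have h2 := hCD i j
      rw [Complex.mul_re, (hA i j).1, (hA j i).1] at h1
      rw [Complex.mul_re, (hC i j).1, (hC j i).1] at h2
      simp only [mul_zero, zero_mul, sub_zero] at h1 h2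
      rw [norm_mul, mul_pow]
      simp only [Complex.mul_re, (hA i j).1, (hA j i).1, (hC i j).1, (hC j i).1,
        mul_zero, zero_mul, sub_zero]
      nlinarith [sq_nonneg (‖B i j‖), sq_nonneg (‖D i j‖)]
    rw [hPdef]
    exact psd_two' hijne _ _ _ _ ha hb har hbr hq hp
  · -- support
    intro i j _ k l hkl
    rw [hPdef]
    simp only [Matrix.of_apply]
    rcases hkl with h | h <;>
      simp only [Finset.mem_insert, Finset.mem_singleton, not_or] at h <;>
      obtain ⟨h1, h2⟩ := h <;> simp [h1, h2]
  · -- the decomposition identity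
    ext k l
    have hterm : ∀ i j, ((if i < j then P i j else 0) : Matrix (Fin d) (Fin d) ℂ) k l
        = (if i < j then P i j k l else 0) := by
      intro i j; split_ifs <;> simp
    rw [Matrix.add_apply, Matrix.add_apply, Matrix.hadamard_apply, Matrix.sum_apply]
    simp_rw [hterm]
    rw [Fintype.sum_prod_type]
    by_cases hkl : k = l
    · subst hkl
      rw [Matrix.diagonal_apply_eq, Matrix.diagonal_apply_eq, Matrix.sub_apply,
        Matrix.sub_apply, Matrix.diagonal_apply_eq, Matrix.diagonal_apply_eq,
        sub_self, sub_self, mul_zero, add_zero, Matrix.mul_apply]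
      have hP : ∀ i j, (if i < j then P i j k k else 0)
          = (if i = k ∧ k < j then A k j * C j k else 0)
            + (if j = k ∧ i < k then A k i * C i k else 0) := by
        intro i j
        rw [hPdef]
        simp only [Matrix.of_apply]
        by_cases hij : i < j
        · have hijne : i ≠ j := ne_of_lt hij
          by_cases h1 : k = i
          · subst h1
            simp [hij, Ne.symm hijne, hijne, lt_irrefl]
          · by_cases h2 : k = j
            · subst h2
              simp [hij, h1, Ne.symm h1, Ne.symm hijne, hijne, lt_irrefl]
            · simp [h1, h2, Ne.symm h1, Ne.symm h2]
        · have c1 : ¬(i = k ∧ k < j) := by rintro ⟨rfl, h⟩; omega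
          have c2 : ¬(j = k ∧ i < k) := by rintro ⟨rfl, h⟩; omega
          simp [hij, c1, c2]
      simp_rw [hP]
      simp_rw [Finset.sum_add_distrib]
      have e1 : ∀ i : Fin d, (∑ j : Fin d, if i = k ∧ k < j then A k j * C j k else 0)
          = if i = k then (∑ j : Fin d, if k < j then A k j * C j k else 0) else 0 := by
        intro i; by_cases h : i = k <;> simp [h]
      have e2 : ∀ i : Fin d, (∑ j : Fin d, if j = k ∧ i < k then A k i * C i k else 0)
          = if i < k then A k i * C i k else 0 := by
        intro i
        simp_rw [ite_and]
        rw [Finset.sum_ite_eq']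
        simp
      simp_rw [e1, e2]
      rw [Finset.sum_ite_eq']
      simp only [Finset.mem_univ, if_true]
      rw [← Finset.sum_add_distrib]
      have e3 : ∀ m : Fin d, ((if k < m then A k m * C m k else 0)
          + (if m < k then A k m * C m k else 0))
          = if m = k then 0 else A k m * C m k := by
        intro m
        by_cases h : m = k
        · subst h; simp
        · rcases lt_or_gt_of_ne h with hlt | hgt
          · simp [hlt, not_lt_of_gt hlt, h]
          · simp [hgt, not_lt_of_gt hgt, h]
      simp_rw [e3]
      have e4 : (∑ m : Fin d, if m = k then (0:ℂ) else A k m * C m k)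
          = (∑ m : Fin d, A k m * C m k) - A k k * C k k := by
        have h : ∀ m : Fin d, (if m = k then (0:ℂ) else A k m * C m k)
            = A k m * C m k - (if m = k then A k m * C m k else 0) := by
          intro m; split_ifs <;> simp_all
        simp_rw [h]
        rw [Finset.sum_sub_distrib, Finset.sum_ite_eq']
        simp
      rw [e4]
      ring
    · rw [Matrix.diagonal_apply_ne _ hkl, Matrix.diagonal_apply_ne _ hkl,
        Matrix.sub_apply, Matrix.sub_apply, Matrix.diagonal_apply_ne _ hkl,
        Matrix.diagonal_apply_ne _ hkl, sub_zero, sub_zero, zero_add, zero_add]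
      have hP : ∀ i j, (if i < j then P i j k l else 0)
          = (if i = k ∧ j = l ∧ k < l then B k l * D k l else 0)
            + (if i = l ∧ j = k ∧ l < k then B k l * D k l else 0) := by
        intro i j
        rw [hPdef]
        simp only [Matrix.of_apply]
        by_cases hij : i < j
        · have hijne : i ≠ j := ne_of_lt hij
          by_cases h1 : k = i
          · subst h1
            by_cases h2 : l = j
            · subst h2
              simp [hij, hijne, Ne.symm hijne, hkl, Ne.symm hkl, not_lt_of_gt hij]
            · simp [hij, hijne, Ne.symm hijne, hkl, Ne.symm hkl, h2, Ne.symm h2,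
                not_lt_of_gt hij]
          · by_cases h2 : k = j
            · subst h2
              by_cases h3 : l = i
              · subst h3
                simp [hij, hijne, Ne.symm hijne, hkl, Ne.symm hkl, h1, Ne.symm h1,
                  not_lt_of_gt hij]
              · simp [hij, hijne, Ne.symm hijne, hkl, Ne.symm hkl, h1, Ne.symm h1,
                  h3, Ne.symm h3, not_lt_of_gt hij]
            · simp [h1, h2, Ne.symm h1, Ne.symm h2]
        · have c1 : ¬(i = k ∧ j = l ∧ k < l) := by rintro ⟨rfl, rfl, h⟩; omega
          have c2 : ¬(i = l ∧ j = k ∧ l < k) := by rintro ⟨rfl, rfl, h⟩; omega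
          simp [hij, c1, c2]
      simp_rw [hP]
      simp_rw [Finset.sum_add_distrib]
      have g1 : ∀ i : Fin d, (∑ j : Fin d, if i = k ∧ j = l ∧ k < l then B k l * D k l else 0)
          = if i = k ∧ k < l then B k l * D k l else 0 := by
        intro i
        have h : ∀ j : Fin d, (i = k ∧ j = l ∧ k < l) ↔ (j = l ∧ (i = k ∧ k < l)) := by tauto
        simp_rw [h, ite_and]
        rw [Finset.sum_ite_eq']
        simp
      have g2 : ∀ i : Fin d, (∑ j : Fin d, if i = l ∧ j = k ∧ l < k then B k l * D k l else 0)
          = if i = l ∧ l < k then B k l * D k l else 0 := by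
        intro i
        have h : ∀ j : Fin d, (i = l ∧ j = k ∧ l < k) ↔ (j = k ∧ (i = l ∧ l < k)) := by tauto
        simp_rw [h, ite_and]
        rw [Finset.sum_ite_eq']
        simp
      simp_rw [g1, g2]
      simp_rw [ite_and]
      rw [Finset.sum_ite_eq', Finset.sum_ite_eq']
      simp only [Finset.mem_univ, if_true]
      rcases lt_or_gt_of_ne hkl with h | h
      · simp [h, not_lt_of_gt h]
      · simp [h, not_lt_of_gt h]
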